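/- Let a > 0. There is a constant c8 = c8(a) > 0 such that for all cycle configurations ω = (X,X̄,σ,T), ω' = (X',X̄',σ',T') with (T,T') ≠ (A,B) and all Z, Γ ∈ ℝ, the map γ ↦ H_middle,a,0(ω | Z, Γ + γ·1_{σ≠σ'} | ω') is twice differentiable on [−1,1], and for j = 1, 2 one has sup_{γ∈[−1,1]} |(∂^j/∂γ^j) H_middle,a,0(ω | Z, Γ + γ·1_{σ≠σ'} | ω')| ≤ c8 + H_expII(ω|Z,Γ|ω'). -/

import Mathlib

open MeasureTheory Real

/-- Tree labels A, B, C, D encoded as `Fin 4`. -/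
abbrev TreeLabel := Fin 4

def lA : TreeLabel := 0
def lB : TreeLabel := 1
def lC : TreeLabel := 2
def lD : TreeLabel := 3

/-- A cycle configuration `(X, X̄, σ, T)`; the sign `σ` is encoded as a `Bool`. -/
abbrev CycleConfig := ℝ × ℝ × Bool × TreeLabel

/-- The numerical value of a sign. -/
noncomputable def sgnv (b : Bool) : ℝ := if b then 1 else -1

/-- Real-valued indicator of a proposition. -/
noncomputable def indR (p : Prop) [Decidable p] : ℝ := if p then 1 else 0

/-- `U = (X + X̄)/2`. -/
noncomputable def Uof (ω : CycleConfig) : ℝ := (ω.1 + ω.2.1) / 2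

/-- `W = Γ + U' − U`. -/
noncomputable def Wof (ω : CycleConfig) (Γ : ℝ) (ω' : CycleConfig) : ℝ :=
  Γ + Uof ω' - Uof ω

noncomputable def Hln (a : ℝ) (ω : CycleConfig) (Z Γ : ℝ) (ω' : CycleConfig) : ℝ :=
  ((3 * a + 1) / 2) *
    (Real.log (exp (ω.1 + Wof ω Γ ω' / 2) + exp (ω'.1 - Wof ω Γ ω' / 2) + exp Z)
      + Real.log (exp (ω.2.1 + Wof ω Γ ω' / 2) + exp (ω'.2.1 - Wof ω Γ ω' / 2) + exp Z))

noncomputable def Hlinear (a : ℝ) (ω : CycleConfig) (Z : ℝ) (ω' : CycleConfig) : ℝ :=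
  -(a + 1 / 2) * (Uof ω + Uof ω' + Z)

noncomputable def Htree (ω : CycleConfig) (Z Γ : ℝ) (ω' : CycleConfig) : ℝ :=
  (1 / 2) * (indR (ω.2.2.2 = lC) * ω.1 + indR (ω.2.2.2 = lD) * ω.2.1
      + indR (ω'.2.2.2 = lC) * ω'.1 + indR (ω'.2.2.2 = lD) * ω'.2.1)
    + (indR (ω'.2.2.2 = lB) + indR (ω.2.2.2 = lA)) * Z
    + (1 / 2) * (indR (ω'.2.2.2 = lB) - indR (ω.2.2.2 = lA)) * Wof ω Γ ω'
    - (1 / 2) * (indR (ω.2.2.2 = lA) - indR (ω.2.2.2 = lB)) * Uof ω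
    + (1 / 2) * (indR (ω'.2.2.2 = lA) - indR (ω'.2.2.2 = lB)) * Uof ω'

noncomputable def HexpI (ω : CycleConfig) (ω' : CycleConfig) : ℝ :=
  (1 / 4) * (exp (-ω.1) + exp (-ω.2.1) + exp (-ω'.1) + exp (-ω'.2.1))

noncomputable def HexpII (ω : CycleConfig) (Z Γ : ℝ) (ω' : CycleConfig) : ℝ :=
  (1 / 2) * (sgnv ω.2.2.1 * exp (Wof ω Γ ω' / 4) - sgnv ω'.2.2.1 * exp (-Wof ω Γ ω' / 4)) ^ 2
    * exp (-Z)

/-- The (finite part of the) middle Hamiltonian `H_middle,a,η`. -/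
noncomputable def Hmid (a η : ℝ) (ω : CycleConfig) (Z Γ : ℝ) (ω' : CycleConfig) : ℝ :=
  Hln a ω Z Γ ω' + Hlinear a ω Z ω' + Htree ω Z Γ ω' + HexpI ω ω' + HexpII ω Z Γ ω' - η * Γ

/-- The left boundary Hamiltonian `H_left,a(Z|ω)`. -/
noncomputable def Hleft (a : ℝ) (Z : ℝ) (ω : CycleConfig) : ℝ :=
  a * Real.log (exp ω.2.1 + exp Z)
    + (a + 1 / 2) * (Real.log (exp ω.1 + exp Z) - Uof ω - Z)
    + (1 / 2) * (indR (ω.2.2.2 = lC) * ω.1 + indR (ω.2.2.2 = lD) * ω.2.1)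
    + indR (ω.2.2.2 = lB) * Z
    + (1 / 2) * (indR (ω.2.2.2 = lA) - indR (ω.2.2.2 = lB)) * Uof ω
    + (1 / 4) * (exp (-ω.1) + exp (-ω.2.1)) + (1 / 2) * exp (-Z)
    + Uof ω / 4

/-- The right boundary Hamiltonian `H_right,a(ω|Z)`. -/
noncomputable def Hright (a : ℝ) (ω : CycleConfig) (Z : ℝ) : ℝ :=
  (a + 1 / 2) * (Real.log (exp ω.1 + exp Z) + Real.log (exp ω.2.1 + exp Z) - Uof ω - Z)
    + (1 / 2) * (indR (ω.2.2.2 = lC) * ω.1 + indR (ω.2.2.2 = lD) * ω.2.1)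
    + indR (ω.2.2.2 = lA) * Z
    - (1 / 2) * (indR (ω.2.2.2 = lA) - indR (ω.2.2.2 = lB)) * Uof ω
    + (1 / 4) * (exp (-ω.1) + exp (-ω.2.1)) + (1 / 2) * exp (-Z)
    - Uof ω / 4

/-! ### Auxiliary material for Lemma 3.3 -/

noncomputable def myD (p q r w : ℝ) : ℝ :=
  (exp (p + w/2) - exp (q - w/2)) / (2 * (exp (p + w/2) + exp (q - w/2) + r))

noncomputable def myD2 (p q r w : ℝ) : ℝ :=
  ((exp (p + w/2) + exp (q - w/2)) * (exp (p + w/2) + exp (q - w/2) + r)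
      - (exp (p + w/2) - exp (q - w/2))^2) /
    (4 * (exp (p + w/2) + exp (q - w/2) + r)^2)

noncomputable def bco (ω ω' : CycleConfig) : ℝ :=
  (1/2) * (indR (ω'.2.2.2 = lB) - indR (ω.2.2.2 = lA))

noncomputable def myF1 (a : ℝ) (ω ω' : CycleConfig) (Z w : ℝ) : ℝ :=
  ((3*a+1)/2) * (myD ω.1 ω'.1 (exp Z) w + myD ω.2.1 ω'.2.1 (exp Z) w) + bco ω ω'
    + (exp (w/2) - exp (-w/2))/4 * exp (-Z)

noncomputable def myF2 (a : ℝ) (ω ω' : CycleConfig) (Z w : ℝ) : ℝ :=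
  ((3*a+1)/2) * (myD2 ω.1 ω'.1 (exp Z) w + myD2 ω.2.1 ω'.2.1 (exp Z) w)
    + (exp (w/2) + exp (-w/2))/8 * exp (-Z)

private lemma aux_h1 (w₀ : ℝ) (x : ℝ) : HasDerivAt (fun γ : ℝ => (w₀ + γ)/2) (1/2) x := by
  simpa using ((hasDerivAt_id x).const_add w₀).div_const 2

private lemma aux_h1' (p w₀ : ℝ) (x : ℝ) :
    HasDerivAt (fun γ : ℝ => p + (w₀ + γ)/2) (1/2) x :=
  (aux_h1 w₀ x).const_add p

private lemma aux_h2' (q w₀ : ℝ) (x : ℝ) :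
    HasDerivAt (fun γ : ℝ => q - (w₀ + γ)/2) (-(1/2)) x :=
  (aux_h1 w₀ x).const_sub q

private lemma aux_h3 (w₀ : ℝ) (x : ℝ) :
    HasDerivAt (fun γ : ℝ => -(w₀ + γ)/2) (-(1/2)) x := by
  have h := (((hasDerivAt_id x).const_add w₀).neg).div_const 2
  exact h.congr_deriv (by norm_num)

private lemma hasDerivAt_log_piece (p q r w₀ : ℝ) (hr : 0 < r) (x : ℝ) :
    HasDerivAt
      (fun γ : ℝ => Real.log (exp (p + (w₀ + γ)/2) + exp (q - (w₀ + γ)/2) + r))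
      (myD p q r (w₀ + x)) x := by
  have hsum : HasDerivAt
      (fun γ : ℝ => exp (p + (w₀ + γ)/2) + exp (q - (w₀ + γ)/2) + r)
      (exp (p + (w₀ + x)/2) * (1/2) + exp (q - (w₀ + x)/2) * (-(1/2))) x :=
    (((aux_h1' p w₀ x).exp).add ((aux_h2' q w₀ x).exp)).add_const r
  have hpos : exp (p + (w₀ + x)/2) + exp (q - (w₀ + x)/2) + r ≠ 0 := by positivity
  have h := hsum.log hpos
  convert h using 1
  unfold myD
  field_simp
  ring

private lemma hasDerivAt_myD (p q r w₀ : ℝ) (hr : 0 < r) (x : ℝ) :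
    HasDerivAt (fun γ : ℝ => myD p q r (w₀ + γ)) (myD2 p q r (w₀ + x)) x := by
  have hN : HasDerivAt
      (fun γ : ℝ => exp (p + (w₀ + γ)/2) - exp (q - (w₀ + γ)/2))
      (exp (p + (w₀ + x)/2) * (1/2) - exp (q - (w₀ + x)/2) * (-(1/2))) x :=
    ((aux_h1' p w₀ x).exp).sub ((aux_h2' q w₀ x).exp)
  have hDen : HasDerivAt
      (fun γ : ℝ => 2 * (exp (p + (w₀ + γ)/2) + exp (q - (w₀ + γ)/2) + r))
      (2 * (exp (p + (w₀ + x)/2) * (1/2) + exp (q - (w₀ + x)/2) * (-(1/2)))) x :=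
    ((((aux_h1' p w₀ x).exp).add ((aux_h2' q w₀ x).exp)).add_const r).const_mul 2
  have hne : 2 * (exp (p + (w₀ + x)/2) + exp (q - (w₀ + x)/2) + r) ≠ 0 := by positivity
  have h := hN.div hDen hne
  have heq : (fun γ : ℝ => myD p q r (w₀ + γ)) =
      fun γ : ℝ => (exp (p + (w₀ + γ)/2) - exp (q - (w₀ + γ)/2)) /
        (2 * (exp (p + (w₀ + γ)/2) + exp (q - (w₀ + γ)/2) + r)) := by
    funext γ; rfl
  rw [heq]
  refine h.congr_deriv ?_
  unfold myD2
  have hpos : (0:ℝ) < exp (p + (w₀ + x)/2) + exp (q - (w₀ + x)/2) + r := by positivity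
  field_simp
  ring

private lemma abs_myD_le (p q r w : ℝ) (hr : 0 < r) : |myD p q r w| ≤ 1/2 := by
  unfold myD
  set A := exp (p + w/2) with hA
  set B := exp (q - w/2) with hB
  have hA0 : 0 < A := exp_pos _
  have hB0 : 0 < B := exp_pos _
  rw [abs_div, abs_of_pos (by positivity : (0:ℝ) < 2 * (A + B + r)),
    div_le_iff₀ (by positivity)]
  have h : |A - B| ≤ A + B := by
    rw [abs_le]; constructor <;> linarith
  linarith

private lemma abs_myD2_le (p q r w : ℝ) (hr : 0 < r) : |myD2 p q r w| ≤ 1/2 := by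
  unfold myD2
  set A := exp (p + w/2) with hA
  set B := exp (q - w/2) with hB
  have hA0 : 0 < A := exp_pos _
  have hB0 : 0 < B := exp_pos _
  rw [abs_div, abs_of_pos (by positivity : (0:ℝ) < 4 * (A + B + r)^2),
    div_le_iff₀ (by positivity)]
  rw [abs_le]
  constructor
  · nlinarith [sq_nonneg (A - B), sq_nonneg (A + B), sq_nonneg (A + B + r),
      mul_pos hA0 hB0, mul_pos (add_pos hA0 hB0) hr, sq_nonneg r]
  · nlinarith [sq_nonneg (A - B), sq_nonneg (A + B), sq_nonneg (A + B + r),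
      mul_pos hA0 hB0, mul_pos (add_pos hA0 hB0) hr, sq_nonneg r]

private lemma hasDerivAt_expII (Z w₀ : ℝ) (x : ℝ) :
    HasDerivAt (fun γ : ℝ => (1/2) * ((exp ((w₀ + γ)/2) + exp (-(w₀ + γ)/2) + 2) * exp (-Z)))
      ((exp ((w₀ + x)/2) - exp (-(w₀ + x)/2))/4 * exp (-Z)) x := by
  have h := ((((aux_h1 w₀ x).exp).add ((aux_h3 w₀ x).exp)).add_const 2).mul_const (exp (-Z))
  have h2 := h.const_mul (1/2 : ℝ)
  refine h2.congr_deriv ?_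
  ring

private lemma hasDerivAt_expII' (Z w₀ : ℝ) (x : ℝ) :
    HasDerivAt (fun γ : ℝ => (exp ((w₀ + γ)/2) - exp (-(w₀ + γ)/2))/4 * exp (-Z))
      ((exp ((w₀ + x)/2) + exp (-(w₀ + x)/2))/8 * exp (-Z)) x := by
  have h := ((((aux_h1 w₀ x).exp).sub ((aux_h3 w₀ x).exp)).div_const 4).mul_const (exp (-Z))
  refine h.congr_deriv ?_
  ring

private lemma sq_rep (ω ω' : CycleConfig) (hne : ω.2.2.1 ≠ ω'.2.2.1) (v : ℝ) :
    (sgnv ω.2.2.1 * exp (v/4) - sgnv ω'.2.2.1 * exp (-v/4)) ^ 2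
      = exp (v/2) + exp (-v/2) + 2 := by
  have e1 : exp (v/4) * exp (v/4) = exp (v/2) := by
    rw [← Real.exp_add]; congr 1; ring
  have e2 : exp (-v/4) * exp (-v/4) = exp (-v/2) := by
    rw [← Real.exp_add]; congr 1; ring
  have e3 : exp (v/4) * exp (-v/4) = 1 := by
    rw [← Real.exp_add, show v/4 + -v/4 = 0 by ring, Real.exp_zero]
  have hb : (ω.2.2.1 = true ∧ ω'.2.2.1 = false) ∨ (ω.2.2.1 = false ∧ ω'.2.2.1 = true) := by
    revert hne; cases ω.2.2.1 <;> cases ω'.2.2.1 <;> simp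
  rcases hb with ⟨h1, h2⟩ | ⟨h1, h2⟩ <;> rw [h1, h2] <;> simp only [sgnv] <;>
    norm_num <;> linear_combination e1 + e2 + 2*e3

private lemma hmid_rep (a : ℝ) (ω ω' : CycleConfig) (Z Γ : ℝ) (hne : ω.2.2.1 ≠ ω'.2.2.1) :
    (fun γ' : ℝ => Hmid a 0 ω Z (Γ + γ' * indR (ω.2.2.1 ≠ ω'.2.2.1)) ω') =
      fun γ' : ℝ =>
        ((3*a+1)/2) * (Real.log (exp (ω.1 + (Wof ω Γ ω' + γ')/2)
              + exp (ω'.1 - (Wof ω Γ ω' + γ')/2) + exp Z)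
            + Real.log (exp (ω.2.1 + (Wof ω Γ ω' + γ')/2)
              + exp (ω'.2.1 - (Wof ω Γ ω' + γ')/2) + exp Z))
          + bco ω ω' * γ'
          + (1/2) * ((exp ((Wof ω Γ ω' + γ')/2) + exp (-(Wof ω Γ ω' + γ')/2) + 2) * exp (-Z))
          + (Hlinear a ω Z ω' + Htree ω Z Γ ω' + HexpI ω ω') := by
  have hind : indR (ω.2.2.1 ≠ ω'.2.2.1) = 1 := by simp [indR, hne]
  funext γ'
  rw [hind]
  have hW : Wof ω (Γ + γ' * 1) ω' = Wof ω Γ ω' + γ' := by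
    simp only [Wof]; ring
  simp only [Hmid, Hln, Htree, HexpII, bco, hW]
  rw [sq_rep ω ω' hne (Wof ω Γ ω' + γ')]
  ring

private lemma abs_bco_le (ω ω' : CycleConfig) : |bco ω ω'| ≤ 1/2 := by
  unfold bco indR
  split <;> split <;> rw [abs_le] <;> norm_num

private lemma exp_half_le_two : exp ((1:ℝ)/2) ≤ 2 := by
  have e : exp ((1:ℝ)/2) * exp ((1:ℝ)/2) = exp 1 := by
    rw [← Real.exp_add]; norm_num
  have h3 : exp (1:ℝ) < 3 := by
    have := Real.exp_one_lt_d9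
    linarith
  nlinarith [Real.exp_pos ((1:ℝ)/2)]

set_option maxHeartbeats 1000000

/-- Lemma 3.3: for `a > 0` there is a constant `c₈(a) > 0` such that the map
`γ ↦ H_middle,a,0(ω | Z, Γ + γ·1_{σ≠σ'} | ω')` is twice differentiable on `[−1,1]`
with first and second derivatives bounded by `c₈ + H_expII(ω|Z,Γ|ω')`. -/
theorem middle_hamiltonian_deformation_derivative_bound (a : ℝ) (ha : 0 < a) :
    ∃ c₈ : ℝ, 0 < c₈ ∧
      ∀ ω ω' : CycleConfig, ¬(ω.2.2.2 = lA ∧ ω'.2.2.2 = lB) → ∀ Z Γ : ℝ,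
        ∀ γ ∈ Set.Icc (-1 : ℝ) 1,
          DifferentiableAt ℝ
            (fun γ' : ℝ => Hmid a 0 ω Z (Γ + γ' * indR (ω.2.2.1 ≠ ω'.2.2.1)) ω') γ ∧
          DifferentiableAt ℝ
            (deriv (fun γ' : ℝ => Hmid a 0 ω Z (Γ + γ' * indR (ω.2.2.1 ≠ ω'.2.2.1)) ω')) γ ∧
          |deriv (fun γ' : ℝ => Hmid a 0 ω Z (Γ + γ' * indR (ω.2.2.1 ≠ ω'.2.2.1)) ω') γ| ≤
            c₈ + HexpII ω Z Γ ω' ∧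
          |deriv (deriv
              (fun γ' : ℝ => Hmid a 0 ω Z (Γ + γ' * indR (ω.2.2.1 ≠ ω'.2.2.1)) ω')) γ| ≤
            c₈ + HexpII ω Z Γ ω' := by
  refine ⟨(3*a+1)/2 + 1, by linarith, ?_⟩
  intro ω ω' hAB Z Γ γ hγ
  have hHnn : 0 ≤ HexpII ω Z Γ ω' := by
    unfold HexpII
    positivity
  by_cases hne : ω.2.2.1 = ω'.2.2.1
  · -- σ = σ' : the map is constant in γ
    have hind : indR (ω.2.2.1 ≠ ω'.2.2.1) = 0 := by simp [indR, hne]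
    have hfun : (fun γ' : ℝ => Hmid a 0 ω Z (Γ + γ' * indR (ω.2.2.1 ≠ ω'.2.2.1)) ω')
        = fun _ : ℝ => Hmid a 0 ω Z Γ ω' := by
      funext γ'; rw [hind]; norm_num
    rw [hfun]
    have hd1 : deriv (fun _ : ℝ => Hmid a 0 ω Z Γ ω') = fun _ : ℝ => (0:ℝ) := by
      funext x; exact deriv_const x _
    refine ⟨differentiableAt_const _, ?_, ?_, ?_⟩
    · rw [hd1]; exact differentiableAt_const _
    · rw [hd1]; simp; linarith
    · rw [hd1]
      have : deriv (fun _ : ℝ => (0:ℝ)) = fun _ : ℝ => (0:ℝ) := by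
        funext x; exact deriv_const x _
      rw [this]; simp; linarith
  · -- σ ≠ σ'
    have hrep := hmid_rep a ω ω' Z Γ hne
    have hII : HexpII ω Z Γ ω'
        = (1/2) * ((exp (Wof ω Γ ω'/2) + exp (-Wof ω Γ ω'/2) + 2) * exp (-Z)) := by
      simp only [HexpII]
      rw [sq_rep ω ω' hne (Wof ω Γ ω')]
      ring
    -- first derivative
    have hd1 : ∀ x : ℝ, HasDerivAt
        (fun γ' : ℝ => Hmid a 0 ω Z (Γ + γ' * indR (ω.2.2.1 ≠ ω'.2.2.1)) ω')
        (myF1 a ω ω' Z (Wof ω Γ ω' + x)) x := by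
      intro x
      rw [hrep]
      have h := (((hasDerivAt_log_piece ω.1 ω'.1 (exp Z) (Wof ω Γ ω') (exp_pos Z) x).add
            (hasDerivAt_log_piece ω.2.1 ω'.2.1 (exp Z) (Wof ω Γ ω') (exp_pos Z) x)).const_mul
              ((3*a+1)/2)).add ((hasDerivAt_id x).const_mul (bco ω ω'))
      have h2 := (h.add (hasDerivAt_expII Z (Wof ω Γ ω') x)).add_const
          (Hlinear a ω Z ω' + Htree ω Z Γ ω' + HexpI ω ω')
      refine h2.congr_deriv ?_
      unfold myF1
      ring
    -- second derivative
    have hd2 : ∀ x : ℝ, HasDerivAt (fun x : ℝ => myF1 a ω ω' Z (Wof ω Γ ω' + x))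
        (myF2 a ω ω' Z (Wof ω Γ ω' + x)) x := by
      intro x
      have heq : (fun x : ℝ => myF1 a ω ω' Z (Wof ω Γ ω' + x)) =
          fun x : ℝ => ((3*a+1)/2) * (myD ω.1 ω'.1 (exp Z) (Wof ω Γ ω' + x)
              + myD ω.2.1 ω'.2.1 (exp Z) (Wof ω Γ ω' + x)) + bco ω ω'
            + (exp ((Wof ω Γ ω' + x)/2) - exp (-(Wof ω Γ ω' + x)/2))/4 * exp (-Z) := by
        funext y; rfl
      rw [heq]
      have h := (((hasDerivAt_myD ω.1 ω'.1 (exp Z) (Wof ω Γ ω') (exp_pos Z) x).add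
            (hasDerivAt_myD ω.2.1 ω'.2.1 (exp Z) (Wof ω Γ ω') (exp_pos Z) x)).const_mul
              ((3*a+1)/2)).add_const (bco ω ω')
      have h2 := h.add (hasDerivAt_expII' Z (Wof ω Γ ω') x)
      exact h2
    have hEq : deriv (fun γ' : ℝ => Hmid a 0 ω Z (Γ + γ' * indR (ω.2.2.1 ≠ ω'.2.2.1)) ω')
        = fun x : ℝ => myF1 a ω ω' Z (Wof ω Γ ω' + x) :=
      funext fun x => (hd1 x).deriv
    -- bounds preparation
    obtain ⟨hγ1, hγ2⟩ := hγ
    have g1 : exp ((Wof ω Γ ω' + γ)/2) ≤ 2 * exp (Wof ω Γ ω'/2) := by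
      rw [show (Wof ω Γ ω' + γ)/2 = Wof ω Γ ω'/2 + γ/2 by ring, Real.exp_add]
      have h2 : exp (γ/2) ≤ 2 :=
        le_trans (Real.exp_le_exp.mpr (by linarith)) exp_half_le_two
      nlinarith [Real.exp_pos (Wof ω Γ ω'/2)]
    have g2 : exp (-(Wof ω Γ ω' + γ)/2) ≤ 2 * exp (-Wof ω Γ ω'/2) := by
      rw [show -(Wof ω Γ ω' + γ)/2 = -Wof ω Γ ω'/2 + -γ/2 by ring, Real.exp_add]
      have h2 : exp (-γ/2) ≤ 2 :=
        le_trans (Real.exp_le_exp.mpr (by linarith)) exp_half_le_two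
      nlinarith [Real.exp_pos (-Wof ω Γ ω'/2)]
    have eZ : (0:ℝ) < exp (-Z) := Real.exp_pos _
    have e1p : (0:ℝ) < exp ((Wof ω Γ ω' + γ)/2) := Real.exp_pos _
    have e2p : (0:ℝ) < exp (-(Wof ω Γ ω' + γ)/2) := Real.exp_pos _
    have E1p : (0:ℝ) < exp (Wof ω Γ ω'/2) := Real.exp_pos _
    have E2p : (0:ℝ) < exp (-Wof ω Γ ω'/2) := Real.exp_pos _
    have hDa1 := abs_myD_le ω.1 ω'.1 (exp Z) (Wof ω Γ ω' + γ) (Real.exp_pos Z)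
    have hDa2 := abs_myD_le ω.2.1 ω'.2.1 (exp Z) (Wof ω Γ ω' + γ) (Real.exp_pos Z)
    have hD2a1 := abs_myD2_le ω.1 ω'.1 (exp Z) (Wof ω Γ ω' + γ) (Real.exp_pos Z)
    have hD2a2 := abs_myD2_le ω.2.1 ω'.2.1 (exp Z) (Wof ω Γ ω' + γ) (Real.exp_pos Z)
    have hco : (0:ℝ) < (3*a+1)/2 := by linarith
    -- bound for myF1
    have b1 : |myF1 a ω ω' Z (Wof ω Γ ω' + γ)| ≤ (3*a+1)/2 + 1 + HexpII ω Z Γ ω' := by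
      rw [hII]
      unfold myF1
      have t1 : |((3*a+1)/2) * (myD ω.1 ω'.1 (exp Z) (Wof ω Γ ω' + γ)
          + myD ω.2.1 ω'.2.1 (exp Z) (Wof ω Γ ω' + γ))| ≤ (3*a+1)/2 := by
        rw [abs_mul, abs_of_pos hco]
        have hsum : |myD ω.1 ω'.1 (exp Z) (Wof ω Γ ω' + γ)
            + myD ω.2.1 ω'.2.1 (exp Z) (Wof ω Γ ω' + γ)| ≤ 1 :=
          (abs_add_le _ _).trans (by linarith)
        nlinarith
      have t2 := abs_bco_le ω ω'
      have t3 : |(exp ((Wof ω Γ ω' + γ)/2) - exp (-(Wof ω Γ ω' + γ)/2))/4 * exp (-Z)|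
          ≤ (exp ((Wof ω Γ ω' + γ)/2) + exp (-(Wof ω Γ ω' + γ)/2))/4 * exp (-Z) := by
        rw [abs_mul, abs_of_pos eZ]
        have : |(exp ((Wof ω Γ ω' + γ)/2) - exp (-(Wof ω Γ ω' + γ)/2))/4|
            ≤ (exp ((Wof ω Γ ω' + γ)/2) + exp (-(Wof ω Γ ω' + γ)/2))/4 := by
          rw [abs_div, abs_of_pos (by norm_num : (0:ℝ) < 4)]
          apply div_le_div_of_nonneg_right ?_ (by norm_num)
          · rw [abs_le]; constructor <;> linarith
        nlinarith
      calc |((3*a+1)/2) * (myD ω.1 ω'.1 (exp Z) (Wof ω Γ ω' + γ)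
            + myD ω.2.1 ω'.2.1 (exp Z) (Wof ω Γ ω' + γ)) + bco ω ω'
            + (exp ((Wof ω Γ ω' + γ)/2) - exp (-(Wof ω Γ ω' + γ)/2))/4 * exp (-Z)|
          ≤ |((3*a+1)/2) * (myD ω.1 ω'.1 (exp Z) (Wof ω Γ ω' + γ)
            + myD ω.2.1 ω'.2.1 (exp Z) (Wof ω Γ ω' + γ))| + |bco ω ω'|
            + |(exp ((Wof ω Γ ω' + γ)/2) - exp (-(Wof ω Γ ω' + γ)/2))/4 * exp (-Z)| :=
            abs_add_three _ _ _
        _ ≤ (3*a+1)/2 + 1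
            + (1/2) * ((exp (Wof ω Γ ω'/2) + exp (-Wof ω Γ ω'/2) + 2) * exp (-Z)) := by
            nlinarith [mul_le_mul_of_nonneg_right g1 eZ.le, mul_le_mul_of_nonneg_right g2 eZ.le]
    -- bound for myF2
    have b2 : |myF2 a ω ω' Z (Wof ω Γ ω' + γ)| ≤ (3*a+1)/2 + 1 + HexpII ω Z Γ ω' := by
      rw [hII]
      unfold myF2
      have t1 : |((3*a+1)/2) * (myD2 ω.1 ω'.1 (exp Z) (Wof ω Γ ω' + γ)
          + myD2 ω.2.1 ω'.2.1 (exp Z) (Wof ω Γ ω' + γ))| ≤ (3*a+1)/2 := by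
        rw [abs_mul, abs_of_pos hco]
        have hsum : |myD2 ω.1 ω'.1 (exp Z) (Wof ω Γ ω' + γ)
            + myD2 ω.2.1 ω'.2.1 (exp Z) (Wof ω Γ ω' + γ)| ≤ 1 :=
          (abs_add_le _ _).trans (by linarith)
        nlinarith
      have t3 : |(exp ((Wof ω Γ ω' + γ)/2) + exp (-(Wof ω Γ ω' + γ)/2))/8 * exp (-Z)|
          = (exp ((Wof ω Γ ω' + γ)/2) + exp (-(Wof ω Γ ω' + γ)/2))/8 * exp (-Z) :=
        abs_of_pos (by positivity)
      calc |((3*a+1)/2) * (myD2 ω.1 ω'.1 (exp Z) (Wof ω Γ ω' + γ)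
            + myD2 ω.2.1 ω'.2.1 (exp Z) (Wof ω Γ ω' + γ))
            + (exp ((Wof ω Γ ω' + γ)/2) + exp (-(Wof ω Γ ω' + γ)/2))/8 * exp (-Z)|
          ≤ |((3*a+1)/2) * (myD2 ω.1 ω'.1 (exp Z) (Wof ω Γ ω' + γ)
            + myD2 ω.2.1 ω'.2.1 (exp Z) (Wof ω Γ ω' + γ))|
            + |(exp ((Wof ω Γ ω' + γ)/2) + exp (-(Wof ω Γ ω' + γ)/2))/8 * exp (-Z)| :=
            abs_add_le _ _
        _ ≤ (3*a+1)/2 + 1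
            + (1/2) * ((exp (Wof ω Γ ω'/2) + exp (-Wof ω Γ ω'/2) + 2) * exp (-Z)) := by
            rw [t3]
            nlinarith [mul_le_mul_of_nonneg_right g1 eZ.le, mul_le_mul_of_nonneg_right g2 eZ.le]
    refine ⟨(hd1 γ).differentiableAt, ?_, ?_, ?_⟩
    · rw [hEq]; exact (hd2 γ).differentiableAt
    · rw [(hd1 γ).deriv]; exact b1
    · rw [hEq, (hd2 γ).deriv]; exact b2
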